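/- Let A be a nonnegative primitive tensor of order m and dimension n ≥ 2 such that every index j ∈ [n] lies on some cycle of M(A) of length at most n−1. Then γ(A) ≤ (n−1)². -/
import Mathlib


open Finset

/- An order-`m` dimension-`n` nonnegative tensor is encoded as
`A : Fin n → (Fin (m-1) → Fin n) → ℝ`, with `A i t = a_{i t₁ ⋯ t_{m-1}}`. -/

/-- The majorization matrix `M(A)_{ij} = a_{ij⋯j}`. -/
def maj (n m : ℕ) (A : Fin n → (Fin (m-1) → Fin n) → ℝ) :
    Matrix (Fin n) (Fin n) ℝ :=
  fun i j => A i (fun _ => j)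

/-- The majorization matrices of the Shao-product powers of `A`:
`majPow n m A k = M(A^k)`, via the recursion
`M(A^{k+1})_{uj} = Σ_{j₂,…,j_m} a_{u j₂ ⋯ j_m} M(A^k)_{j₂ j} ⋯ M(A^k)_{j_m j}`
(with `M(A^0)` the identity, so that `majPow n m A 1 = maj n m A`). -/
def majPow (n m : ℕ) (A : Fin n → (Fin (m-1) → Fin n) → ℝ) :
    ℕ → Matrix (Fin n) (Fin n) ℝ
  | 0 => 1
  | k + 1 => fun u j =>
      ∑ t : Fin (m-1) → Fin n, A u t * ∏ i, majPow n m A k (t i) j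

/-- `A` is primitive: `M(A^r) > 0` entrywise for some positive `r`. -/
def Primitive (n m : ℕ) (A : Fin n → (Fin (m-1) → Fin n) → ℝ) : Prop :=
  ∃ r, 0 < r ∧ ∀ u j, 0 < majPow n m A r u j

/-- `i` lies on a cycle of length `t`, `1 ≤ t ≤ n-1`, of `M(A)`. -/
def OnShortCycle (n m : ℕ) (A : Fin n → (Fin (m-1) → Fin n) → ℝ)
    (i : Fin n) : Prop :=
  ∃ t : ℕ, 1 ≤ t ∧ t ≤ n - 1 ∧ ∃ c : ℕ → Fin n, c 0 = i ∧
    (∀ s, s < t → 0 < maj n m A (c ((s + 1) % t)) (c s)) ∧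
    (∀ s₁ s₂, s₁ < t → s₂ < t → c s₁ = c s₂ → s₁ = s₂)

section Aux
variable {n m : ℕ} {A : Fin n → (Fin (m-1) → Fin n) → ℝ}

lemma majPow_nonneg (hA : ∀ u t, 0 ≤ A u t) :
    ∀ (k : ℕ) (u j : Fin n), 0 ≤ majPow n m A k u j := by
  intro k
  induction k with
  | zero =>
    intro u j
    simp only [majPow, Matrix.one_apply]
    split <;> norm_num
  | succ k ih =>
    intro u j
    simp only [majPow]
    exact Finset.sum_nonneg fun t _ =>
      mul_nonneg (hA u t) (Finset.prod_nonneg fun i _ => ih _ _)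

lemma step_iff (hA : ∀ u t, 0 ≤ A u t) (k : ℕ) (u j : Fin n) :
    0 < majPow n m A (k+1) u j ↔
      ∃ t, 0 < A u t ∧ ∀ i, 0 < majPow n m A k (t i) j := by
  constructor
  · intro h
    simp only [majPow] at h
    obtain ⟨t, -, ht⟩ := Finset.exists_lt_of_sum_lt
      (show ∑ t : Fin (m-1) → Fin n, (0:ℝ)
          < ∑ t : Fin (m-1) → Fin n, A u t * ∏ i, majPow n m A k (t i) j by
        simpa using h)
    have h1 : 0 < A u t ∧ 0 < ∏ i, majPow n m A k (t i) j := by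
      rcases mul_pos_iff.mp ht with h' | h'
      · exact h'
      · exact absurd h'.1 (not_lt.mpr (hA u t))
    refine ⟨t, h1.1, fun i => ?_⟩
    have hne : ∀ i ∈ Finset.univ, majPow n m A k (t i) j ≠ 0 :=
      Finset.prod_ne_zero_iff.mp (ne_of_gt h1.2)
    exact lt_of_le_of_ne (majPow_nonneg hA k (t i) j) (Ne.symm (hne i (Finset.mem_univ i)))
  · rintro ⟨t, ht, hti⟩
    simp only [majPow]
    have hterm : 0 < A u t * ∏ i, majPow n m A k (t i) j :=
      mul_pos ht (Finset.prod_pos fun i _ => hti i)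
    refine lt_of_lt_of_le hterm ?_
    exact Finset.single_le_sum
      (f := fun s => A u s * ∏ i, majPow n m A k (s i) j)
      (fun s _ => mul_nonneg (hA u s) (Finset.prod_nonneg fun i _ => majPow_nonneg hA k _ _))
      (Finset.mem_univ t)

lemma majPow_mono (hA : ∀ u t, 0 ≤ A u t) (a : ℕ) {b b' : ℕ} {j j' : Fin n}
    (h : ∀ u, 0 < majPow n m A b u j → 0 < majPow n m A b' u j') :
    ∀ u, 0 < majPow n m A (a + b) u j → 0 < majPow n m A (a + b') u j' := by
  induction a with
  | zero => simpa using h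
  | succ a ih =>
    intro u hu
    have e1 : a + 1 + b = (a + b) + 1 := by ring
    have e2 : a + 1 + b' = (a + b') + 1 := by ring
    rw [e1, step_iff hA] at hu
    rw [e2, step_iff hA]
    obtain ⟨t, ht, hti⟩ := hu
    exact ⟨t, ht, fun i => ih (t i) (hti i)⟩

lemma majPow_edge (hA : ∀ u t, 0 ≤ A u t) {k : ℕ} {u v j : Fin n}
    (he : 0 < maj n m A u v) (hv : 0 < majPow n m A k v j) :
    0 < majPow n m A (k+1) u j :=
  (step_iff hA k u j).mpr ⟨fun _ => v, he, fun _ => hv⟩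

lemma majPow_zero_self (j : Fin n) : 0 < majPow n m A 0 j j := by
  simp [majPow, Matrix.one_apply]

lemma majPow_zero_eq {u j : Fin n} (h : 0 < majPow n m A 0 u j) : u = j := by
  by_contra hne
  simp [majPow, Matrix.one_apply, hne] at h

lemma cycle_self (hA : ∀ u t, 0 ≤ A u t) {t : ℕ} (ht : 1 ≤ t) {c : ℕ → Fin n} {j : Fin n}
    (hc0 : c 0 = j)
    (hedge : ∀ s, s < t → 0 < maj n m A (c ((s + 1) % t)) (c s)) :
    0 < majPow n m A t j j := by
  have key : ∀ s, s ≤ t → 0 < majPow n m A s (c (s % t)) j := by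
    intro s
    induction s with
    | zero =>
      intro _
      rw [Nat.zero_mod, hc0]
      exact majPow_zero_self j
    | succ s ih =>
      intro hst
      have hs : s < t := hst
      have hmod : s % t = s := Nat.mod_eq_of_lt hs
      have hprev := ih (le_of_lt hs)
      rw [hmod] at hprev
      exact majPow_edge hA (hedge s hs) hprev
  have := key t le_rfl
  rwa [Nat.mod_self, hc0] at this

end Aux

section Main
variable {n m : ℕ} {A : Fin n → (Fin (m-1) → Fin n) → ℝ}

theorem stmt17_helper (n m : ℕ) (hm : 2 ≤ m) (hn : 2 ≤ n)
    (A : Fin n → (Fin (m-1) → Fin n) → ℝ) (hA : ∀ u t, 0 ≤ A u t)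
    (hprim : ∃ r, 0 < r ∧ ∀ u j, 0 < majPow n m A r u j)
    (hcyc : ∀ j : Fin n, ∃ t : ℕ, 1 ≤ t ∧ t ≤ n - 1 ∧ ∃ c : ℕ → Fin n, c 0 = j ∧
      (∀ s, s < t → 0 < maj n m A (c ((s + 1) % t)) (c s)) ∧
      (∀ s₁ s₂, s₁ < t → s₂ < t → c s₁ = c s₂ → s₁ = s₂)) :
    sInf {r : ℕ | 0 < r ∧ ∀ u j : Fin n, 0 < majPow n m A r u j}
      ≤ (n - 1) ^ 2 := by
  obtain ⟨r, hr, hpos⟩ := hprim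
  -- every row of A has a positive entry
  have hrow : ∀ u : Fin n, ∃ t, 0 < A u t := by
    intro u
    obtain ⟨r', rfl⟩ : ∃ r', r = r' + 1 := ⟨r - 1, by omega⟩
    obtain ⟨t, ht, -⟩ := (step_iff hA r' u ⟨0, by omega⟩).mp (hpos u ⟨0, by omega⟩)
    exact ⟨t, ht⟩
  -- fullness persists upward
  have hfull_step : ∀ (k : ℕ) (j : Fin n),
      (∀ u, 0 < majPow n m A k u j) → ∀ u, 0 < majPow n m A (k+1) u j := by
    intro k j h u
    obtain ⟨t, ht⟩ := hrow u
    exact (step_iff hA k u j).mpr ⟨t, ht, fun i => h (t i)⟩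
  have hfull_persist : ∀ (k s : ℕ) (j : Fin n), k ≤ s →
      (∀ u, 0 < majPow n m A k u j) → ∀ u, 0 < majPow n m A s u j := by
    intro k s j hks h
    induction s, hks using Nat.le_induction with
    | base => exact h
    | succ s hks ih => exact hfull_step s j ih
  -- main claim: full positivity at exponent (n-1)^2
  have main : ∀ u j : Fin n, 0 < majPow n m A ((n-1)^2) u j := by
    intro u j
    obtain ⟨t, ht1, ht2, c, hc0, hedge, -⟩ := hcyc j
    have hjj : 0 < majPow n m A t j j := cycle_self hA ht1 hc0 hedge
    set S : ℕ → Finset (Fin n) :=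
      fun k => Finset.univ.filter (fun u => 0 < majPow n m A k u j) with hS
    have hmemS : ∀ k u, u ∈ S k ↔ 0 < majPow n m A k u j := by
      intro k u; simp [hS]
    -- growth
    have hgrow : ∀ k : ℕ, S (k * t) ⊆ S ((k + 1) * t) := by
      intro k u hu
      rw [hmemS] at hu ⊢
      have h0 : ∀ v, 0 < majPow n m A 0 v j → 0 < majPow n m A t v j := by
        intro v hv
        rw [majPow_zero_eq hv]
        exact hjj
      have := majPow_mono hA (k * t) h0 u (by simpa using hu)
      have e : k * t + t = (k + 1) * t := by ring
      rwa [e] at this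
    -- stall implies full
    have hstall : ∀ k : ℕ, S ((k + 1) * t) = S (k * t) → S (k * t) = Finset.univ := by
      intro k heq
      have hdown : ∀ u, 0 < majPow n m A (k * t + t) u j → 0 < majPow n m A (k * t) u j := by
        intro u hu
        have : u ∈ S ((k + 1) * t) := by
          rw [hmemS]
          have e : (k + 1) * t = k * t + t := by ring
          rwa [e]
        rw [heq, hmemS] at this
        exact this
      have hiter : ∀ l : ℕ, ∀ u, 0 < majPow n m A (k * t + l * t) u j →
          0 < majPow n m A (k * t) u j := by
        intro l
        induction l with
        | zero => simpa using fun u h => h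
        | succ l ih =>
          intro u hu
          have e : k * t + (l + 1) * t = t + (k * t + l * t) := by ring
          rw [e] at hu
          have := majPow_mono hA t ih u hu
          have e2 : t + k * t = k * t + t := by ring
          rw [e2] at this
          exact hdown u this
      apply Finset.eq_univ_of_forall
      intro u
      rw [hmemS]
      apply hiter r u
      have hge : r ≤ k * t + r * t := by nlinarith
      exact hfull_persist r (k * t + r * t) j hge (fun v => hpos v j) u
    -- cardinality growth
    have hcard : ∀ k : ℕ, S (k * t) = Finset.univ ∨ k + 1 ≤ (S (k * t)).card := by
      intro k
      induction k with
      | zero =>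
        right
        have : j ∈ S (0 * t) := by
          rw [hmemS]
          simpa using majPow_zero_self (A := A) (m := m) j
        calc 1 = ({j} : Finset (Fin n)).card := by simp
          _ ≤ (S (0 * t)).card := Finset.card_le_card (by simpa using this)
      | succ k ih =>
        rcases ih with h | h
        · left
          apply Finset.eq_univ_of_forall
          intro u
          exact hgrow k (h ▸ Finset.mem_univ u)
        · by_cases heq : S ((k + 1) * t) = S (k * t)
          · left
            rw [heq]
            exact hstall k heq
          · right
            have hlt : S (k * t) ⊂ S ((k + 1) * t) :=
              Finset.ssubset_iff_subset_ne.mpr ⟨hgrow k, fun e => heq e.symm⟩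
            have := Finset.card_lt_card hlt
            omega
    -- conclude full at (n-1)*t
    have hfullnt : ∀ v, 0 < majPow n m A ((n - 1) * t) v j := by
      intro v
      rcases hcard (n - 1) with h | h
      · rw [← hmemS]; rw [h]; exact Finset.mem_univ v
      · have hcle : (S ((n - 1) * t)).card ≤ n := by
          simpa using Finset.card_le_univ (S ((n - 1) * t))
        have : (S ((n - 1) * t)).card = Fintype.card (Fin n) := by
          simp only [Fintype.card_fin]
          omega
        have huniv := Finset.eq_univ_of_card _ this
        rw [← hmemS, huniv]
        exact Finset.mem_univ v
    have hle : (n - 1) * t ≤ (n - 1) ^ 2 := by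
      have : (n - 1) * t ≤ (n - 1) * (n - 1) := Nat.mul_le_mul_left _ ht2
      simpa [sq] using this
    exact hfull_persist ((n - 1) * t) ((n - 1) ^ 2) j hle hfullnt u
  apply Nat.sInf_le
  constructor
  · have : 1 ≤ n - 1 := by omega
    positivity
  · exact main

end Main

/-- if every index lies on a short cycle of `M(A)`,
then `γ(A) ≤ (n-1)²`. -/
theorem stmt_17 (n m : ℕ) (hm : 2 ≤ m) (hn : 2 ≤ n)
    (A : Fin n → (Fin (m-1) → Fin n) → ℝ) (hA : ∀ u t, 0 ≤ A u t)
    (hprim : Primitive n m A)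
    (hcyc : ∀ j : Fin n, OnShortCycle n m A j) :
    sInf {r : ℕ | 0 < r ∧ ∀ u j : Fin n, 0 < majPow n m A r u j}
      ≤ (n - 1) ^ 2 := by
  exact stmt17_helper n m hm hn A hA hprim hcyc
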